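/- Let m_1,…,m_N ∈ K^× and Y := y_{i_1}(1/m_1)·y_{i_2}(1/m_2)⋯y_{i_N}(1/m_N), where (i_1,…,i_N) = i_0. For 1 ≤ i < j ≤ n write m_{ji} := m_{s_i+j−i}, and for index sets J, K' let Δ^J_{K'}(Y) denote the minor of Y with row set J and column set K'. Then all the minors appearing below are nonzero and: m_{ni} = Δ^{{n}}_{{n−i+1}}(Y)/Δ^{{n}}_{{n−i}}(Y) for 1 ≤ i ≤ n−1; and for 1 ≤ i < j ≤ n−1, m_{ji} = (Δ^{[j+1,n]}_{[j−i+1,n−i]}(Y)·Δ^{[j,n]}_{[j−i+1,n−i+1]}(Y)) / (Δ^{[j+1,n]}_{[j−i+2,n−i+1]}(Y)·Δ^{[j,n]}_{[j−i,n−i]}(Y)), where [a,b] := {a, a+1, …, b}. -/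

import Mathlib

open Matrix

noncomputable section

variable {K : Type*} [Field K]

/-- `x_i(z)`: identity except entry `z` in (1-based) position `(i, i+1)`. -/
def xMat (n i : ℕ) (z : K) : Matrix (Fin n) (Fin n) K :=
  Matrix.of fun a b => if (a : ℕ) = (b : ℕ) then 1
    else if (a : ℕ) + 1 = i ∧ (b : ℕ) = i then z else 0

/-- `y_i(z)`: identity except entry `z` in (1-based) position `(i+1, i)`. -/
def yMat (n i : ℕ) (z : K) : Matrix (Fin n) (Fin n) K :=
  Matrix.of fun a b => if (a : ℕ) = (b : ℕ) then 1
    else if (a : ℕ) = i ∧ (b : ℕ) + 1 = i then z else 0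

/-- `x_{-i}(z)`: identity except the 2×2 submatrix in (1-based) rows/columns `i, i+1`
is `((z⁻¹, 0), (1, z))`. -/
def xnegMat (n i : ℕ) (z : K) : Matrix (Fin n) (Fin n) K :=
  Matrix.of fun a b =>
    if (a : ℕ) + 1 = i ∧ (b : ℕ) + 1 = i then z⁻¹
    else if (a : ℕ) = i ∧ (b : ℕ) = i then z
    else if (a : ℕ) = i ∧ (b : ℕ) + 1 = i then 1
    else if (a : ℕ) = (b : ℕ) then 1
    else 0

/-- `s̄_i := x_i(-1) · y_i(1) · x_i(-1)`. -/
def sbar (n i : ℕ) : Matrix (Fin n) (Fin n) K :=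
  xMat n i (-1) * yMat n i 1 * xMat n i (-1)

/-- The reduced expression `i₀ = (1,2,…,n-1, 1,2,…,n-2, …, 1,2, 1)` for `w₀`. -/
def i0List (n : ℕ) : List ℕ :=
  ((List.range (n - 1)).map fun j => List.range' 1 (n - 1 - j)).foldr (· ++ ·) []

/-- The reduced expression `i₀' = (n-1,…,1, n-1,…,2, …, n-1,n-2, n-1)` for `w₀`. -/
def i0'List (n : ℕ) : List ℕ :=
  ((List.range (n - 1)).map fun j => (List.range' (1 + j) (n - 1 - j)).reverse).foldr (· ++ ·) []

/-- The matrix `w̄₀ = s̄_{i_1} ⋯ s̄_{i_N}` (computed along `i₀`; it is independent of the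
choice of reduced expression). -/
def w0Mat (n : ℕ) : Matrix (Fin n) (Fin n) K :=
  ((i0List n).map fun i => sbar n i).prod

/-- `x_{-i_1}(z_1) ⋯ x_{-i_N}(z_N)` along the word `l` (with 1-based coordinates `z`). -/
def xnegProd (n : ℕ) (l : List ℕ) (z : ℕ → K) : Matrix (Fin n) (Fin n) K :=
  ((List.range l.length).map fun r => xnegMat n (l.getD r 0) (z (r + 1))).prod

/-- `x_{i_1}(p_1) ⋯ x_{i_N}(p_N)` along the word `l`. -/
def xProd (n : ℕ) (l : List ℕ) (p : ℕ → K) : Matrix (Fin n) (Fin n) K :=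
  ((List.range l.length).map fun r => xMat n (l.getD r 0) (p (r + 1))).prod

/-- `y_{i_1}(q_1) ⋯ y_{i_N}(q_N)` along the word `l`. -/
def yProd (n : ℕ) (l : List ℕ) (q : ℕ → K) : Matrix (Fin n) (Fin n) K :=
  ((List.range l.length).map fun r => yMat n (l.getD r 0) (q (r + 1))).prod

/-- The adjacent transposition `σ_i` (swapping `i` and `i+1`), as a function on `ℕ`. -/
def sigmaFun (i : ℕ) : ℕ → ℕ := fun k => if k = i then i + 1 else if k = i + 1 then i else k

/-- `σ_{i_1} ∘ σ_{i_2} ∘ ⋯ ∘ σ_{i_N}` (rightmost factor applied first). -/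
def wordPerm (l : List ℕ) : ℕ → ℕ := l.foldr (fun i f => sigmaFun i ∘ f) id

/-- A reduced expression for the longest element `w₀` of `Sₙ`. -/
def IsReducedWord (n : ℕ) (l : List ℕ) : Prop :=
  l.length = n * (n - 1) / 2 ∧ (∀ i ∈ l, 1 ≤ i ∧ i ≤ n - 1) ∧
    ∀ k, 1 ≤ k → k ≤ n → wordPerm l k = n + 1 - k

/-- Lower unitriangular. -/
def IsLowerUni {n : ℕ} (M : Matrix (Fin n) (Fin n) K) : Prop :=
  (∀ i, M i i = 1) ∧ ∀ i j : Fin n, i < j → M i j = 0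

/-- Upper unitriangular. -/
def IsUpperUni {n : ℕ} (M : Matrix (Fin n) (Fin n) K) : Prop :=
  (∀ i, M i i = 1) ∧ ∀ i j : Fin n, j < i → M i j = 0

/-- `s_k := Σ_{j=1}^{k-1} (n - j)`. -/
def sIdx (n k : ℕ) : ℕ := ∑ j ∈ Finset.range (k - 1), (n - (j + 1))

/-- 1-based access to a matrix entry (junk value `0` out of range). -/
def Mget {n : ℕ} (M : Matrix (Fin n) (Fin n) K) (i j : ℕ) : K :=
  if h : i - 1 < n ∧ j - 1 < n then M ⟨i - 1, h.1⟩ ⟨j - 1, h.2⟩ else 0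

/-- The minor `Δ^{[a, a+sz-1]}_{[c, c+sz-1]}(M)` with consecutive (1-based) row set starting
at `a` and column set starting at `c`, both of size `sz`. -/
def minorM {n : ℕ} (M : Matrix (Fin n) (Fin n) K) (sz a c : ℕ) : K :=
  (Matrix.of fun p q : Fin sz => Mget M (a + (p : ℕ)) (c + (q : ℕ))).det

lemma yProd_nil (n : ℕ) (q : ℕ → K) : yProd n [] q = 1 := by
  simp [yProd]

lemma yProd_cons (n : ℕ) (a : ℕ) (l : List ℕ) (q : ℕ → K) :
    yProd n (a :: l) q = yMat n a (q 1) * yProd n l (fun r => q (r + 1)) := by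
  simp [yProd, List.range_succ_eq_map, List.map_map, Function.comp_def]

lemma yProd_append (n : ℕ) (l1 l2 : List ℕ) (q : ℕ → K) :
    yProd n (l1 ++ l2) q = yProd n l1 q * yProd n l2 (fun r => q (r + l1.length)) := by
  induction l1 generalizing q with
  | nil => simp [yProd_nil]
  | cons a l1 ih =>
      rw [List.cons_append, yProd_cons, ih, yProd_cons, mul_assoc]
      have : ∀ r, r + l1.length + 1 = r + (a :: l1).length := by intro r; simp; omega
      simp only [this]

lemma i0List_succ (n' : ℕ) : i0List (n' + 1) = List.range' 1 n' ++ i0List n' := by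
  cases n' with
  | zero => simp [i0List]
  | succ k =>
      simp [i0List, List.range_succ_eq_map, List.map_map, Function.comp_def]

def Bmat (n t : ℕ) (q : ℕ → K) : Matrix (Fin n) (Fin n) K :=
  Matrix.of fun a b => if (a : ℕ) = (b : ℕ) then 1
    else if (a : ℕ) = (b : ℕ) + 1 ∧ (a : ℕ) ≤ t then q (a : ℕ) else 0

lemma mul_yMat_apply (n i : ℕ) (hi : i < n) (z : K) (P : Matrix (Fin n) (Fin n) K)
    (a b : Fin n) :
    (P * yMat n i z) a b = P a b + (if (b : ℕ) + 1 = i then z * P a ⟨i, hi⟩ else 0) := by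
  rw [Matrix.mul_apply]
  have key : ∀ c : Fin n, P a c * yMat n i z c b =
      (if c = b then P a c else 0) +
      (if (b : ℕ) + 1 = i then (if c = (⟨i, hi⟩ : Fin n) then z * P a c else 0) else 0) := by
    intro c
    simp only [yMat, Matrix.of_apply, Fin.ext_iff]
    split_ifs with h1 h2 h3 h4 h5 h6 h7 <;>
      simp_all <;> first | ring | omega
  rw [Finset.sum_congr rfl fun c _ => key c, Finset.sum_add_distrib,
    Finset.sum_ite_eq' Finset.univ b (fun c => P a c)]
  simp only [Finset.mem_univ, if_true]
  congr 1
  split_ifs with hb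
  · rw [Finset.sum_ite_eq' Finset.univ (⟨i, hi⟩ : Fin n) (fun c => z * P a c)]
    simp
  · simp

lemma Bmat_zero (n : ℕ) (q : ℕ → K) : Bmat n 0 q = 1 := by
  ext a b
  simp only [Bmat, Matrix.of_apply, Matrix.one_apply, Fin.ext_iff]
  split_ifs <;> simp_all <;> omega

lemma yProd_range' (n : ℕ) (t : ℕ) (ht : t ≤ n - 1) (hn : 1 ≤ n) (q : ℕ → K) :
    yProd n (List.range' 1 t) q = Bmat n t q := by
  induction t with
  | zero => simp [yProd_nil, Bmat_zero]
  | succ t ih =>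
      have ht' : t ≤ n - 1 := by omega
      have h1 : List.range' 1 (t + 1) = List.range' 1 t ++ [1 + t] := by
        simpa using (List.range'_concat : List.range' 1 (t + 1) = List.range' 1 t ++ [1 + 1 * t])
      rw [h1, yProd_append, ih ht']
      have h2 : yProd n [1 + t] (fun r => q (r + (List.range' 1 t).length)) =
          yMat n (1 + t) (q (1 + t)) := by
        rw [yProd_cons, yProd_nil, mul_one]
        congr 1
        simp [Nat.add_comm]
      rw [h2]
      have hti : t + 1 < n := by omega
      ext a b
      rw [mul_yMat_apply n (1 + t) (by omega) _ _ a b]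
      have hB : Bmat n t q a (⟨1 + t, by omega⟩ : Fin n) =
          if (a : ℕ) = 1 + t then 1 else 0 := by
        simp only [Bmat, Matrix.of_apply]
        split_ifs <;> simp_all <;> omega
      rw [hB]
      simp only [Bmat, Matrix.of_apply]
      split_ifs <;> simp_all <;> first | ring1 | omega | (exfalso; omega)

lemma i0List_mem_le (m : ℕ) : ∀ i ∈ i0List m, 1 ≤ i ∧ i ≤ m - 1 := by
  induction m with
  | zero => simp [i0List]
  | succ m ih =>
      rw [i0List_succ]
      intro i hi
      rcases List.mem_append.1 hi with h | h
      · have := List.mem_range'_1.1 h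
        omega
      · have := ih i h
        omega

lemma yProd_row_high (n t : ℕ) (l : List ℕ) (q : ℕ → K)
    (hl : ∀ i ∈ l, i ≤ t) (a : Fin n) (ha : t < (a : ℕ)) (b : Fin n) :
    yProd n l q a b = if a = b then 1 else 0 := by
  induction l generalizing q with
  | nil => simp [yProd_nil, Matrix.one_apply]
  | cons i l ih =>
      rw [yProd_cons, Matrix.mul_apply]
      have hy : ∀ c : Fin n, yMat n i (q 1) a c = if a = c then (1 : K) else 0 := by
        intro c
        have hia : (a : ℕ) ≠ i := by have := hl i (by simp); omega
        simp only [yMat, Matrix.of_apply, Fin.ext_iff]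
        split_ifs <;> simp_all
      simp only [hy]
      rw [Finset.sum_congr rfl (fun c _ => by
        rw [ite_mul, one_mul, zero_mul]), Finset.sum_ite_eq Finset.univ a]
      simp only [Finset.mem_univ, if_true]
      exact ih (fun r => q (r + 1)) (fun i hi => hl i (by simp [hi]))

lemma isLowerUni_one (n : ℕ) : IsLowerUni (1 : Matrix (Fin n) (Fin n) K) := by
  constructor
  · intro i; simp
  · intro i j hij; have : (i : ℕ) < (j : ℕ) := hij; simp [Matrix.one_apply, Fin.ext_iff]; omega

lemma IsLowerUni.mul {n : ℕ} {A B : Matrix (Fin n) (Fin n) K}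
    (hA : IsLowerUni A) (hB : IsLowerUni B) : IsLowerUni (A * B) := by
  constructor
  · intro i
    rw [Matrix.mul_apply]
    rw [Finset.sum_eq_single i]
    · rw [hA.1, hB.1, one_mul]
    · intro c _ hc
      rcases lt_or_gt_of_ne hc with h | h
      · rw [hB.2 c i h, mul_zero]
      · rw [hA.2 i c h, zero_mul]
    · simp
  · intro i j hij
    rw [Matrix.mul_apply]
    apply Finset.sum_eq_zero
    intro c _
    rcases lt_or_ge c j with h | h
    · rw [hB.2 c j h, mul_zero]
    · rw [hA.2 i c (lt_of_lt_of_le hij h), zero_mul]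

lemma isLowerUni_yMat (n i : ℕ) (z : K) : IsLowerUni (yMat n i z) := by
  constructor
  · intro a; simp [yMat]
  · intro a b hab
    simp only [yMat, Matrix.of_apply]
    have : (a : ℕ) < (b : ℕ) := hab
    split_ifs <;> first | rfl | omega

lemma isLowerUni_yProd (n : ℕ) (l : List ℕ) (q : ℕ → K) : IsLowerUni (yProd n l q) := by
  induction l generalizing q with
  | nil => rw [yProd_nil]; exact isLowerUni_one n
  | cons i l ih => rw [yProd_cons]; exact (isLowerUni_yMat n i (q 1)).mul (ih _)

lemma minor_principal {n : ℕ} (M : Matrix (Fin n) (Fin n) K) (h : IsLowerUni M)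
    (sz a : ℕ) (ha : 1 ≤ a) (han : a + sz ≤ n + 1) : minorM M sz a a = 1 := by
  unfold minorM
  rw [Matrix.det_of_lowerTriangular]
  · apply Finset.prod_eq_one
    intro p _
    have hp : a + (p : ℕ) - 1 < n := by omega
    simp only [Matrix.of_apply, Mget, dif_pos (⟨hp, hp⟩ : _ ∧ _)]
    exact h.1 _
  · intro p q hpq
    have hp : a + (p : ℕ) - 1 < n := by omega
    have hq : a + (q : ℕ) - 1 < n := by omega
    simp only [Matrix.of_apply, Mget, dif_pos (⟨hp, hq⟩ : _ ∧ _)]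
    apply h.2
    simp only [Fin.lt_def]
    have : (p : ℕ) < (q : ℕ) := hpq
    omega

lemma Bmat_mul_apply (n t : ℕ) (q : ℕ → K) (Z : Matrix (Fin n) (Fin n) K)
    (r s : Fin n) (hr1 : 1 ≤ (r : ℕ)) (hrt : (r : ℕ) ≤ t) :
    (Bmat n t q * Z) r s = Z r s + q (r : ℕ) * Z ⟨(r : ℕ) - 1, by omega⟩ s := by
  rw [Matrix.mul_apply]
  have key : ∀ c : Fin n, Bmat n t q r c * Z c s =
      (if c = r then Z c s else 0) +
      (if c = (⟨(r : ℕ) - 1, by omega⟩ : Fin n) then q (r : ℕ) * Z c s else 0) := by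
    intro c
    by_cases h1 : c = r
    · subst h1
      simp only [Bmat, Matrix.of_apply, eq_self_iff_true, if_true, one_mul]
      rw [if_neg (by simp [Fin.ext_iff]; omega), add_zero]
    · by_cases h2 : c = (⟨(r : ℕ) - 1, by omega⟩ : Fin n)
      · have hc2 : (c : ℕ) = (r : ℕ) - 1 := by rw [h2]
        have hv : (r : ℕ) ≠ (c : ℕ) := by omega
        simp only [Bmat, Matrix.of_apply]
        rw [if_neg hv, if_pos ⟨by omega, hrt⟩, if_neg h1, if_pos h2, zero_add]
      · have hv1 : (r : ℕ) ≠ (c : ℕ) := fun h => h1 (Fin.ext h.symm)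
        have hv2 : (c : ℕ) ≠ (r : ℕ) - 1 := fun h => h2 (Fin.ext (by simpa using h))
        simp only [Bmat, Matrix.of_apply]
        rw [if_neg hv1, if_neg (fun h => hv2 (by omega)), if_neg h1, if_neg h2, zero_mul,
          add_zero]
  rw [Finset.sum_congr rfl fun c _ => key c, Finset.sum_add_distrib,
    Finset.sum_ite_eq' Finset.univ r (fun c => Z c s),
    Finset.sum_ite_eq' Finset.univ (⟨(r : ℕ) - 1, by omega⟩ : Fin n)
      (fun c => q (r : ℕ) * Z c s)]
  simp

lemma minor_step (n n' : ℕ) (q : ℕ → K) (sz c : ℕ) (hsz : 1 ≤ sz) (hc : 1 ≤ c)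
    (hcs : c + sz ≤ n') (hn' : n' ≤ n) :
    minorM (yProd n (i0List n') q) sz (n' + 1 - sz) c
      = (∏ p ∈ Finset.range sz, q (n' - sz + p)) *
        minorM (yProd n (i0List (n' - 1)) (fun r => q (r + (n' - 1)))) sz (n' - sz) c := by
  have hn2 : 2 ≤ n' := by omega
  set Z := yProd n (i0List (n' - 1)) (fun r => q (r + (n' - 1))) with hZ
  have hsplit : yProd n (i0List n') q = Bmat n (n' - 1) q * Z := by
    conv_lhs => rw [show n' = (n' - 1) + 1 by omega]
    rw [i0List_succ, yProd_append, yProd_range' n (n' - 1) (by omega) (by omega)]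
    rw [hZ]
    simp [List.length_range']
  set a := n' + 1 - sz with haa
  have ha2 : 2 ≤ a := by omega
  have hasz : a + sz = n' + 1 := by omega
  set T : Matrix (Fin sz) (Fin sz) K := Matrix.of fun p p' =>
    if p' = p then q (n' - sz + (p : ℕ)) else
      if (p' : ℕ) = (p : ℕ) + 1 then 1 else 0 with hT
  have hZhigh : ∀ (u v : Fin n), (n' : ℕ) - 1 ≤ (u : ℕ) → (v : ℕ) < n' - 1 → Z u v = 0 := by
    intro u v hu hv
    rw [hZ, yProd_row_high n (n' - 2) _ _ (fun i hi => by
      have := i0List_mem_le (n' - 1) i hi; omega) u (by omega) v]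
    have : ¬ (u = v) := by
      intro h; subst h
      exact absurd rfl (by omega : (u : ℕ) ≠ (u : ℕ))
    simp [this]
  have hsub : (Matrix.of fun p q' : Fin sz =>
        Mget (yProd n (i0List n') q) (a + (p : ℕ)) (c + (q' : ℕ)))
      = T * (Matrix.of fun p q' : Fin sz => Mget Z (a - 1 + (p : ℕ)) (c + (q' : ℕ))) := by
    ext p q'
    have hp := p.isLt
    have hq := q'.isLt
    have hrow : a + (p : ℕ) - 1 < n := by omega
    have hcol : c + (q' : ℕ) - 1 < n := by omega
    have hlhs : Mget (yProd n (i0List n') q) (a + (p : ℕ)) (c + (q' : ℕ))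
        = Z ⟨a + (p : ℕ) - 1, hrow⟩ ⟨c + (q' : ℕ) - 1, hcol⟩
          + q (a + (p : ℕ) - 1) * Z ⟨a + (p : ℕ) - 2, by omega⟩ ⟨c + (q' : ℕ) - 1, hcol⟩ := by
      rw [Mget, dif_pos (⟨hrow, hcol⟩ : _ ∧ _), hsplit,
        Bmat_mul_apply n (n' - 1) q Z ⟨a + (p : ℕ) - 1, hrow⟩ ⟨c + (q' : ℕ) - 1, hcol⟩
          (by simp; omega) (by simp; omega)]
      simp only [show a + (p : ℕ) - 1 - 1 = a + (p : ℕ) - 2 from by omega]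
    have hrhs : (T * (Matrix.of fun p q' : Fin sz =>
          Mget Z (a - 1 + (p : ℕ)) (c + (q' : ℕ)))) p q'
        = q (n' - sz + (p : ℕ)) * Mget Z (a - 1 + (p : ℕ)) (c + (q' : ℕ))
          + ∑ p' : Fin sz, (if (p' : ℕ) = (p : ℕ) + 1
              then Mget Z (a - 1 + (p' : ℕ)) (c + (q' : ℕ)) else 0) := by
      rw [Matrix.mul_apply]
      have key : ∀ p' : Fin sz, T p p' *
            (Matrix.of fun p q' : Fin sz => Mget Z (a - 1 + (p : ℕ)) (c + (q' : ℕ))) p' q'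
          = (if p' = p then q (n' - sz + (p : ℕ)) * Mget Z (a - 1 + (p' : ℕ)) (c + (q' : ℕ))
              else 0)
            + (if (p' : ℕ) = (p : ℕ) + 1
                then Mget Z (a - 1 + (p' : ℕ)) (c + (q' : ℕ)) else 0) := by
        intro p'
        simp only [hT, Matrix.of_apply]
        by_cases h1 : p' = p
        · subst h1
          rw [if_pos rfl, if_pos rfl, if_neg (by omega), add_zero]
        · by_cases h2 : (p' : ℕ) = (p : ℕ) + 1
          · rw [if_neg h1, if_pos h2, if_neg h1, if_pos h2, one_mul, zero_add]
          · rw [if_neg h1, if_neg h2, if_neg h1, if_neg h2, zero_mul, add_zero]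
      rw [Finset.sum_congr rfl fun p' _ => key p', Finset.sum_add_distrib,
        Finset.sum_ite_eq' Finset.univ p
          (fun p' => q (n' - sz + (p : ℕ)) * Mget Z (a - 1 + (p' : ℕ)) (c + (q' : ℕ)))]
      simp
    rw [Matrix.of_apply, hlhs, hrhs]
    have hm1 : Mget Z (a - 1 + (p : ℕ)) (c + (q' : ℕ))
        = Z ⟨a + (p : ℕ) - 2, by omega⟩ ⟨c + (q' : ℕ) - 1, hcol⟩ := by
      rw [Mget, dif_pos (⟨by omega, hcol⟩ : _ ∧ _)]
      congr 1
      simp only [Fin.mk.injEq]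
      omega
    by_cases hps : (p : ℕ) + 1 < sz
    · have hsum : ∑ p' : Fin sz, (if (p' : ℕ) = (p : ℕ) + 1
          then Mget Z (a - 1 + (p' : ℕ)) (c + (q' : ℕ)) else 0)
          = Z ⟨a + (p : ℕ) - 1, hrow⟩ ⟨c + (q' : ℕ) - 1, hcol⟩ := by
        have hiff : ∀ p' : Fin sz, ((p' : ℕ) = (p : ℕ) + 1) ↔ p' = (⟨(p : ℕ) + 1, hps⟩ : Fin sz) := by
          intro p'; simp [Fin.ext_iff]
        simp only [hiff]
        rw [Finset.sum_ite_eq' Finset.univ (⟨(p : ℕ) + 1, hps⟩ : Fin sz)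
            (fun p' => Mget Z (a - 1 + (p' : ℕ)) (c + (q' : ℕ)))]
        simp only [Finset.mem_univ, if_true]
        rw [Mget, dif_pos (⟨by simp; omega, hcol⟩ : _ ∧ _)]
        congr 1
        simp only [Fin.mk.injEq]
        omega
      rw [hsum, hm1]
      have hqe : q (a + (p : ℕ) - 1) = q (n' - sz + (p : ℕ)) := by congr 1; omega
      rw [hqe]; ring
    · have hlast : Z ⟨a + (p : ℕ) - 1, hrow⟩ ⟨c + (q' : ℕ) - 1, hcol⟩ = 0 := by
        apply hZhigh <;> simp <;> omega
      have hsum : ∑ p' : Fin sz, (if (p' : ℕ) = (p : ℕ) + 1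
          then Mget Z (a - 1 + (p' : ℕ)) (c + (q' : ℕ)) else 0) = 0 := by
        apply Finset.sum_eq_zero
        intro p' _
        have := p'.isLt
        rw [if_neg (by omega)]
      rw [hsum, hm1, hlast]
      have hqe : q (a + (p : ℕ) - 1) = q (n' - sz + (p : ℕ)) := by congr 1; omega
      rw [hqe]; ring
  unfold minorM
  rw [hsub, Matrix.det_mul]
  have h1 : (Matrix.of fun p q' : Fin sz => Mget Z (a - 1 + (p : ℕ)) (c + (q' : ℕ)))
      = (Matrix.of fun p q' : Fin sz => Mget Z (n' - sz + (p : ℕ)) (c + (q' : ℕ))) := by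
    ext p q'
    simp only [Matrix.of_apply, show a - 1 = n' - sz from by omega]
  rw [h1]
  congr 1
  rw [Matrix.det_of_upperTriangular]
  · rw [← Fin.prod_univ_eq_prod_range (fun p => q (n' - sz + p)) sz]
    apply Finset.prod_congr rfl
    intro p _
    simp [hT]
  · intro i j hij
    have hji : (j : ℕ) < (i : ℕ) := hij
    simp only [hT, Matrix.of_apply]
    rw [if_neg (by simp [Fin.ext_iff]; omega), if_neg (by omega)]

def qProd (q : ℕ → K) (n' sz c : ℕ) : K :=
  ∏ k ∈ Finset.range (n' + 1 - c - sz), ∏ u ∈ Finset.range sz,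
    q (sIdx n' (k + 1) + (n' - k - sz + u))

lemma sIdx_one (n : ℕ) : sIdx n 1 = 0 := by simp [sIdx]

lemma sIdx_shift (n' k : ℕ) : sIdx (n' + 1) (k + 2) = n' + sIdx n' (k + 1) := by
  unfold sIdx
  rw [show k + 2 - 1 = k + 1 from rfl, show k + 1 - 1 = k from rfl,
    Finset.sum_range_succ']
  rw [add_comm]
  congr 1
  apply Finset.sum_congr rfl
  intro j _
  omega

lemma minor_closed (n : ℕ) : ∀ n' (q : ℕ → K) sz c, 1 ≤ sz → 1 ≤ c → c + sz ≤ n' + 1 →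
    n' ≤ n → minorM (yProd n (i0List n') q) sz (n' + 1 - sz) c = qProd q n' sz c := by
  intro n'
  induction n' with
  | zero => intro q sz c h1 h2 h3 _; omega
  | succ n' ih =>
      intro q sz c h1 h2 h3 hn'
      by_cases hce : c + sz = n' + 2
      · have hca : c = n' + 1 + 1 - sz := by omega
        subst hca
        rw [minor_principal _ (isLowerUni_yProd n _ q) sz _ (by omega) (by omega)]
        unfold qProd
        rw [show n' + 1 + 1 - (n' + 1 + 1 - sz) - sz = 0 from by omega]
        simp
      · have hcs : c + sz ≤ n' + 1 := by omega
        rw [minor_step n (n' + 1) q sz c h1 h2 hcs hn']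
        simp only [Nat.add_sub_cancel]
        rw [ih (fun r => q (r + n')) sz c h1 h2 hcs (by omega)]
        unfold qProd
        rw [show n' + 1 + 1 - c - sz = (n' + 1 - c - sz) + 1 from by omega,
          Finset.prod_range_succ']
        rw [mul_comm]
        congr 1
        · apply Finset.prod_congr rfl
          intro k hk
          apply Finset.prod_congr rfl
          intro u hu
          have hk' := Finset.mem_range.1 hk
          have hu' := Finset.mem_range.1 hu
          rw [show k + 1 + 1 = k + 2 from rfl, sIdx_shift]
          congr 1
          have e1 : n' + 1 - (k + 1) - sz + u = n' - k - sz + u := by omega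
          rw [e1]
          ring
        · apply Finset.prod_congr rfl
          intro u hu
          rw [sIdx_one]
          congr 1
          omega

def PP (q : ℕ → K) (n sz t : ℕ) : K :=
  ∏ k ∈ Finset.range t, ∏ u ∈ Finset.range sz, q (sIdx n (k + 1) + (n - k - sz + u))

lemma qProd_PP (q : ℕ → K) (n sz c : ℕ) : qProd q n sz c = PP q n sz (n + 1 - c - sz) := rfl

lemma sIdx_succ' (n k : ℕ) : sIdx n (k + 2) = sIdx n (k + 1) + (n - (k + 1)) := by
  unfold sIdx
  rw [show k + 2 - 1 = k + 1 from rfl, show k + 1 - 1 = k from rfl, Finset.sum_range_succ]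

lemma sIdx_mono (n k k' : ℕ) (h : k ≤ k') : sIdx n k ≤ sIdx n k' :=
  Finset.sum_le_sum_of_subset (Finset.range_mono (by omega : k - 1 ≤ k' - 1))

lemma sIdx_top (n : ℕ) : sIdx n n = n * (n - 1) / 2 := by
  unfold sIdx
  have h1 : ∀ j ∈ Finset.range (n - 1), n - (j + 1) = (fun j => j + 1) (n - 1 - 1 - j) := by
    intro j hj
    have := Finset.mem_range.1 hj
    simp only
    omega
  rw [Finset.sum_congr rfl h1, Finset.sum_range_reflect (fun j => j + 1) (n - 1)]
  have h2 : ∑ j ∈ Finset.range (n - 1), (j + 1) = ∑ j ∈ Finset.range n, j := by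
    rcases Nat.eq_zero_or_pos n with h | h
    · subst h; simp
    · rw [show n = (n - 1) + 1 from by omega, Finset.sum_range_succ']
      simp
  rw [h2, Finset.sum_range_id]

lemma qIdx_bound (n k v : ℕ) (hk : k + 2 ≤ n) (hv : 1 ≤ v) (hvn : v ≤ n - k - 1) :
    1 ≤ sIdx n (k + 1) + v ∧ sIdx n (k + 1) + v ≤ n * (n - 1) / 2 := by
  constructor
  · exact le_trans hv (Nat.le_add_left v _)
  · have h1 : sIdx n (k + 1) + v ≤ sIdx n (k + 2) := by
      rw [sIdx_succ']
      exact Nat.add_le_add_left (by omega) _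
    calc sIdx n (k + 1) + v ≤ sIdx n (k + 2) := h1
      _ ≤ sIdx n n := sIdx_mono n (k + 2) n (by omega)
      _ = n * (n - 1) / 2 := sIdx_top n

lemma PP_ne_zero (n : ℕ) (m : ℕ → K) (hm : ∀ r, 1 ≤ r → r ≤ n * (n - 1) / 2 → m r ≠ 0)
    (sz t : ℕ) (hsz : 1 ≤ sz) (ht : t + sz ≤ n) :
    PP (fun r => (m r)⁻¹) n sz t ≠ 0 := by
  unfold PP
  rw [Finset.prod_ne_zero_iff]
  intro k hk
  rw [Finset.prod_ne_zero_iff]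
  intro u hu
  have hk' := Finset.mem_range.1 hk
  have hu' := Finset.mem_range.1 hu
  apply inv_ne_zero
  have hb := qIdx_bound n k (n - k - sz + u) (by omega) (by omega) (by omega)
  exact hm _ hb.1 hb.2

lemma myDivHelper (x y : K) (hx : x ≠ 0) (hy : y ≠ 0) : y = x / (x * y⁻¹) := by
  field_simp

theorem stmt13 (n : ℕ) (hn : 2 ≤ n) (m : ℕ → K)
    (hm : ∀ r, 1 ≤ r → r ≤ n * (n - 1) / 2 → m r ≠ 0)
    (Y : Matrix (Fin n) (Fin n) K) (hY : Y = yProd n (i0List n) (fun r => (m r)⁻¹)) :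
    (∀ i, 1 ≤ i → i ≤ n - 1 →
      minorM Y 1 n (n - i + 1) ≠ 0 ∧ minorM Y 1 n (n - i) ≠ 0 ∧
      m (sIdx n i + (n - i)) = minorM Y 1 n (n - i + 1) / minorM Y 1 n (n - i)) ∧
    (∀ i j, 1 ≤ i → i < j → j ≤ n - 1 →
      minorM Y (n - j) (j + 1) (j - i + 1) ≠ 0 ∧
      minorM Y (n - j + 1) j (j - i + 1) ≠ 0 ∧
      minorM Y (n - j) (j + 1) (j - i + 2) ≠ 0 ∧
      minorM Y (n - j + 1) j (j - i) ≠ 0 ∧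
      m (sIdx n i + (j - i)) =
        (minorM Y (n - j) (j + 1) (j - i + 1) * minorM Y (n - j + 1) j (j - i + 1)) /
        (minorM Y (n - j) (j + 1) (j - i + 2) * minorM Y (n - j + 1) j (j - i))) := by
  subst hY
  set qq : ℕ → K := fun r => (m r)⁻¹ with hqq
  have hminor : ∀ sz c, 1 ≤ sz → 1 ≤ c → c + sz ≤ n + 1 →
      minorM (yProd n (i0List n) qq) sz (n + 1 - sz) c = PP qq n sz (n + 1 - c - sz) := by
    intro sz c h1 h2 h3
    rw [minor_closed n n qq sz c h1 h2 h3 le_rfl, qProd_PP]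
  constructor
  · -- first family
    intro i hi1 hi2
    obtain ⟨i', rfl⟩ : ∃ i'', i = i'' + 1 := ⟨i - 1, by omega⟩
    have hA : minorM (yProd n (i0List n) qq) 1 n (n - (i' + 1) + 1) = PP qq n 1 i' := by
      have h := hminor 1 (n - (i' + 1) + 1) (by omega) (by omega) (by omega)
      rw [show n + 1 - 1 = n from by omega] at h
      rw [h, show n + 1 - (n - (i' + 1) + 1) - 1 = i' from by omega]
    have hB : minorM (yProd n (i0List n) qq) 1 n (n - (i' + 1)) = PP qq n 1 (i' + 1) := by
      have h := hminor 1 (n - (i' + 1)) (by omega) (by omega) (by omega)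
      rw [show n + 1 - 1 = n from by omega] at h
      rw [h, show n + 1 - (n - (i' + 1)) - 1 = i' + 1 from by omega]
    set t0 := sIdx n (i' + 1) + (n - (i' + 1)) with ht0
    have hidx := qIdx_bound n i' (n - (i' + 1)) (by omega) (by omega) (by omega)
    have hmt : m t0 ≠ 0 := hm t0 hidx.1 hidx.2
    have hstep : PP qq n 1 (i' + 1) = PP qq n 1 i' * qq t0 := by
      unfold PP
      rw [Finset.prod_range_succ]
      congr 1
      rw [Finset.prod_range_one, show n - i' - 1 + 0 = n - (i' + 1) from by omega]
    have hA0 : PP qq n 1 i' ≠ 0 := PP_ne_zero n m hm 1 i' le_rfl (by omega)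
    have hB0 : PP qq n 1 (i' + 1) ≠ 0 := PP_ne_zero n m hm 1 (i' + 1) le_rfl (by omega)
    refine ⟨by rw [hA]; exact hA0, by rw [hB]; exact hB0, ?_⟩
    rw [hA, hB, hstep]
    have hqt : qq t0 = (m t0)⁻¹ := rfl
    rw [hqt]
    exact myDivHelper _ _ hA0 hmt
  · -- second family
    intro i j hi1 hij hj
    obtain ⟨i', rfl⟩ : ∃ i'', i = i'' + 1 := ⟨i - 1, by omega⟩
    have hA : minorM (yProd n (i0List n) qq) (n - j) (j + 1) (j - (i' + 1) + 1)
        = PP qq n (n - j) (i' + 1) := by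
      have h := hminor (n - j) (j - (i' + 1) + 1) (by omega) (by omega) (by omega)
      rw [show n + 1 - (n - j) = j + 1 from by omega] at h
      rw [h, show n + 1 - (j - (i' + 1) + 1) - (n - j) = i' + 1 from by omega]
    have hC : minorM (yProd n (i0List n) qq) (n - j) (j + 1) (j - (i' + 1) + 2)
        = PP qq n (n - j) i' := by
      have h := hminor (n - j) (j - (i' + 1) + 2) (by omega) (by omega) (by omega)
      rw [show n + 1 - (n - j) = j + 1 from by omega] at h
      rw [h, show n + 1 - (j - (i' + 1) + 2) - (n - j) = i' from by omega]
    have hB : minorM (yProd n (i0List n) qq) (n - j + 1) j (j - (i' + 1) + 1)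
        = PP qq n (n - j + 1) i' := by
      have h := hminor (n - j + 1) (j - (i' + 1) + 1) (by omega) (by omega) (by omega)
      rw [show n + 1 - (n - j + 1) = j from by omega] at h
      rw [h, show n + 1 - (j - (i' + 1) + 1) - (n - j + 1) = i' from by omega]
    have hD : minorM (yProd n (i0List n) qq) (n - j + 1) j (j - (i' + 1))
        = PP qq n (n - j + 1) (i' + 1) := by
      have h := hminor (n - j + 1) (j - (i' + 1)) (by omega) (by omega) (by omega)
      rw [show n + 1 - (n - j + 1) = j from by omega] at h
      rw [h, show n + 1 - (j - (i' + 1)) - (n - j + 1) = i' + 1 from by omega]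
    set t0 := sIdx n (i' + 1) + (j - (i' + 1)) with ht0
    have hidx := qIdx_bound n i' (j - (i' + 1)) (by omega) (by omega) (by omega)
    have hmt : m t0 ≠ 0 := hm t0 hidx.1 hidx.2
    set gA : K := ∏ u ∈ Finset.range (n - j), qq (sIdx n (i' + 1) + (j - (i' + 1) + 1 + u))
      with hgA
    have hstepA : PP qq n (n - j) (i' + 1) = PP qq n (n - j) i' * gA := by
      unfold PP
      rw [Finset.prod_range_succ]
      congr 1
      rw [hgA]
      apply Finset.prod_congr rfl
      intro u hu
      congr 1
      omega
    have hstepD : PP qq n (n - j + 1) (i' + 1) = PP qq n (n - j + 1) i' * (gA * qq t0) := by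
      unfold PP
      rw [Finset.prod_range_succ]
      congr 1
      rw [show n - j + 1 = (n - j) + 1 from rfl, Finset.prod_range_succ']
      congr 1
      · rw [hgA]
        apply Finset.prod_congr rfl
        intro u hu
        congr 1
        omega
      · rw [ht0]
        congr 1
        omega
    have hgA0 : gA ≠ 0 := by
      rw [hgA, Finset.prod_ne_zero_iff]
      intro u hu
      have hu' := Finset.mem_range.1 hu
      apply inv_ne_zero
      have hb := qIdx_bound n i' (j - (i' + 1) + 1 + u) (by omega) (by omega) (by omega)
      exact hm _ hb.1 hb.2
    have hC0 : PP qq n (n - j) i' ≠ 0 := PP_ne_zero n m hm (n - j) i' (by omega) (by omega)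
    have hB0 : PP qq n (n - j + 1) i' ≠ 0 :=
      PP_ne_zero n m hm (n - j + 1) i' (by omega) (by omega)
    have hqt : qq t0 = (m t0)⁻¹ := rfl
    refine ⟨by rw [hA, hstepA]; exact mul_ne_zero hC0 hgA0,
      by rw [hB]; exact hB0,
      by rw [hC]; exact hC0,
      by rw [hD, hstepD, hqt]; exact mul_ne_zero hB0 (mul_ne_zero hgA0 (inv_ne_zero hmt)), ?_⟩
    rw [hA, hB, hC, hD, hstepA, hstepD, hqt]
    have hden : PP qq n (n - j) i' * (PP qq n (n - j + 1) i' * (gA * (m t0)⁻¹)) ≠ 0 :=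
      mul_ne_zero hC0 (mul_ne_zero hB0 (mul_ne_zero hgA0 (inv_ne_zero hmt)))
    rw [eq_div_iff hden]
    field_simp
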